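/- With notation as in the parabolic setting for gl_n (partition into blocks of sizes i_1,…,i_s, and m_i := ∑_{k=1}^s min(i, i_k)), let F_j = ∑_{|J|=j} Δ_J be the sum of all principal minors of size j. Then for every j ∈ {1,…,n}, the quantity j − deg_{n⁻} F_j equals the unique i ∈ {1,…,i_max} such that m_{i−1} < j ≤ m_i, where i_max = max_k i_k. -/

import Mathlib

open MvPolynomial

/-- The principal minor `Δ_J` in `Sym(gl_n)`. -/
noncomputable def deltaMinor {K : Type*} [Field K] {n : ℕ} (J : Finset (Fin n)) :
    MvPolynomial (Fin n × Fin n) K :=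
  ∑ σ : Equiv.Perm {x // x ∈ J},
    (Equiv.Perm.sign σ : ℤ) • ∏ j : {x // x ∈ J}, X ((j : Fin n), ((σ j : Fin n)))

/-- `F_j`, the sum of all principal minors of size `j`. -/
noncomputable def sumMinors (K : Type*) [Field K] (n j : ℕ) :
    MvPolynomial (Fin n × Fin n) K :=
  ∑ J ∈ Finset.powersetCard j (Finset.univ : Finset (Fin n)), deltaMinor J

/-- The degree in `n⁻` of an element of `Sym(gl_n)`. -/
noncomputable def degNilradical {K : Type*} [Field K] {n s : ℕ} (blk : Fin n → Fin s)
    (f : MvPolynomial (Fin n × Fin n) K) : ℕ :=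
  f.support.sup fun m => ∑ pq ∈ m.support, if blk pq.2 < blk pq.1 then m pq else 0

/-! ### Auxiliary definitions -/

/-- The exponent function of the monomial of `Δ_J` attached to a permutation `σ`. -/
noncomputable def expOf {n : ℕ} (J : Finset (Fin n)) (σ : Equiv.Perm {x // x ∈ J}) :
    (Fin n × Fin n) →₀ ℕ :=
  ∑ p : {x // x ∈ J}, Finsupp.single ((p : Fin n), ((σ p : Fin n))) 1

lemma expOf_apply {n : ℕ} (J : Finset (Fin n)) (σ : Equiv.Perm {x // x ∈ J})
    (p q : Fin n) :
    expOf J σ (p, q) = if h : ∃ hp : p ∈ J, ((σ ⟨p, hp⟩ : Fin n)) = q then 1 else 0 := by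
  classical
  rw [expOf, Finsupp.finset_sum_apply]
  split_ifs with h
  · obtain ⟨hp, hq⟩ := h
    rw [Finset.sum_eq_single (⟨p, hp⟩ : {x // x ∈ J})]
    · simp [hq, Finsupp.single_apply]
    · intro b _ hb
      rw [Finsupp.single_apply, if_neg]
      intro hc
      exact hb (Subtype.ext (congrArg Prod.fst hc))
    · intro habs; exact absurd (Finset.mem_univ _) habs
  · refine Finset.sum_eq_zero fun b _ => ?_
    rw [Finsupp.single_apply, if_neg]
    intro hc
    obtain ⟨h1, h2⟩ := Prod.mk.injEq .. ▸ hc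
    exact h ⟨h1 ▸ b.2, by subst h1; rw [Subtype.coe_eta]; exact h2⟩

lemma expOf_support {n : ℕ} (J : Finset (Fin n)) (σ : Equiv.Perm {x // x ∈ J}) :
    (expOf J σ).support =
      Finset.univ.image (fun p : {x // x ∈ J} => ((p : Fin n), (σ p : Fin n))) := by
  classical
  ext ⟨p, q⟩
  rw [Finsupp.mem_support_iff, expOf_apply, Finset.mem_image]
  constructor
  · intro h
    split_ifs at h with hc
    · obtain ⟨hp, hq⟩ := hc
      exact ⟨⟨p, hp⟩, Finset.mem_univ _, by simp [hq]⟩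
    · exact absurd rfl h
  · rintro ⟨b, -, hb⟩
    obtain ⟨h1, h2⟩ := Prod.mk.injEq .. ▸ hb
    rw [dif_pos ⟨h1 ▸ b.2, by subst h1; rw [Subtype.coe_eta]; exact h2⟩]
    exact one_ne_zero

lemma expOf_fst {n : ℕ} (J : Finset (Fin n)) (σ : Equiv.Perm {x // x ∈ J}) :
    (expOf J σ).support.image Prod.fst = J := by
  classical
  rw [expOf_support, Finset.image_image]
  have : (Prod.fst ∘ fun p : {x // x ∈ J} => ((p : Fin n), (σ p : Fin n))) =
      fun p : {x // x ∈ J} => (p : Fin n) := rfl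
  rw [this, Finset.univ_eq_attach, Finset.attach_image_val]

lemma expOf_inj_right {n : ℕ} (J : Finset (Fin n)) (σ σ' : Equiv.Perm {x // x ∈ J})
    (h : expOf J σ = expOf J σ') : σ = σ' := by
  ext p
  have hL : expOf J σ ((p : Fin n), (σ p : Fin n)) = 1 := by
    rw [expOf_apply, dif_pos ⟨p.2, by rw [Subtype.coe_eta]⟩]
  have h0 : expOf J σ' ((p : Fin n), (σ p : Fin n)) = 1 := by rw [← h]; exact hL
  rw [expOf_apply] at h0
  split_ifs at h0 with hc
  · obtain ⟨hp, hq⟩ := hc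
    rw [Subtype.coe_eta] at hq
    exact congrArg Fin.val hq.symm

/-- the count of strictly lowering positions of `σ`. -/
noncomputable def dcount {n s : ℕ} (blk : Fin n → Fin s) (J : Finset (Fin n))
    (σ : Equiv.Perm {x // x ∈ J}) : ℕ :=
  (Finset.univ.filter fun p : {x // x ∈ J} => blk (σ p : Fin n) < blk (p : Fin n)).card

lemma inner_expOf {n s : ℕ} (blk : Fin n → Fin s) (J : Finset (Fin n))
    (σ : Equiv.Perm {x // x ∈ J}) :
    (∑ pq ∈ (expOf J σ).support, if blk pq.2 < blk pq.1 then expOf J σ pq else 0)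
      = dcount blk J σ := by
  classical
  rw [expOf_support, Finset.sum_image (by
    intro a _ b _ hab
    exact Subtype.ext (congrArg Prod.fst hab))]
  have h1 : ∀ p : {x // x ∈ J}, expOf J σ ((p : Fin n), (σ p : Fin n)) = 1 := by
    intro p
    rw [expOf_apply, dif_pos ⟨p.2, by rw [Subtype.coe_eta]⟩]
  simp only [h1]
  rw [dcount, Finset.card_filter]


lemma prod_X_eq {K : Type*} [Field K] {n : ℕ} (J : Finset (Fin n))
    (σ : Equiv.Perm {x // x ∈ J}) :
    (∏ p : {x // x ∈ J}, (X ((p : Fin n), (σ p : Fin n)) : MvPolynomial (Fin n × Fin n) K))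
      = monomial (expOf J σ) 1 := by
  classical
  rw [expOf]
  induction (Finset.univ : Finset {x // x ∈ J}) using Finset.induction_on with
  | empty => simp
  | insert _ _ hx ih =>
    rw [Finset.prod_insert hx, Finset.sum_insert hx, ih, X, monomial_mul, one_mul]

lemma deltaMinor_eq {K : Type*} [Field K] {n : ℕ} (J : Finset (Fin n)) :
    (deltaMinor J : MvPolynomial (Fin n × Fin n) K) =
      ∑ σ : Equiv.Perm {x // x ∈ J},
        monomial (expOf J σ) (((Equiv.Perm.sign σ : ℤ) : K)) := by
  rw [deltaMinor]
  refine Finset.sum_congr rfl fun σ _ => ?_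
  rw [prod_X_eq, smul_monomial, zsmul_eq_mul, mul_one]

lemma coeff_sumMinors {K : Type*} [Field K] {n : ℕ} (j : ℕ) (μ : (Fin n × Fin n) →₀ ℕ) :
    coeff μ (sumMinors K n j) =
      ∑ J ∈ Finset.powersetCard j (Finset.univ : Finset (Fin n)),
        ∑ σ : Equiv.Perm {x // x ∈ J},
          if expOf J σ = μ then ((Equiv.Perm.sign σ : ℤ) : K) else 0 := by
  classical
  rw [sumMinors]
  rw [coeff_sum]
  refine Finset.sum_congr rfl fun J _ => ?_
  rw [deltaMinor_eq, coeff_sum]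
  exact Finset.sum_congr rfl fun σ _ => coeff_monomial μ _ _

lemma mem_support_sumMinors {K : Type*} [Field K] {n : ℕ} {j : ℕ}
    {μ : (Fin n × Fin n) →₀ ℕ} (h : μ ∈ (sumMinors K n j).support) :
    ∃ (J : Finset (Fin n)) (σ : Equiv.Perm {x // x ∈ J}), J.card = j ∧ expOf J σ = μ := by
  classical
  rw [mem_support_iff, coeff_sumMinors] at h
  obtain ⟨J, hJ, hne⟩ := Finset.exists_ne_zero_of_sum_ne_zero h
  obtain ⟨σ, -, hne2⟩ := Finset.exists_ne_zero_of_sum_ne_zero hne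
  refine ⟨J, σ, (Finset.mem_powersetCard.mp hJ).2, ?_⟩
  by_contra hc
  rw [if_neg hc] at hne2
  exact hne2 rfl

lemma coeff_expOf_ne_zero {K : Type*} [Field K] {n j : ℕ} (J₀ : Finset (Fin n))
    (hcard : J₀.card = j) (σ₀ : Equiv.Perm {x // x ∈ J₀}) :
    coeff (expOf J₀ σ₀) (sumMinors K n j) ≠ 0 := by
  classical
  rw [coeff_sumMinors]
  rw [Finset.sum_eq_single_of_mem J₀
    (Finset.mem_powersetCard.mpr ⟨Finset.subset_univ _, hcard⟩)]
  · rw [Finset.sum_eq_single σ₀]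
    · rw [if_pos rfl]
      rcases Int.units_eq_one_or (Equiv.Perm.sign σ₀) with h | h <;> simp [h]
    · intro σ _ hσ
      rw [if_neg]
      intro hc
      exact hσ (expOf_inj_right _ _ _ hc)
    · intro habs; exact absurd (Finset.mem_univ _) habs
  · intro J _ hJ
    refine Finset.sum_eq_zero fun σ _ => ?_
    rw [if_neg]
    intro hc
    have := expOf_fst J σ
    rw [hc, expOf_fst] at this
    exact hJ this.symm

lemma card_filter_subtype {n : ℕ} (J : Finset (Fin n)) (P : Fin n → Prop)
    [DecidablePred P] :
    (Finset.univ.filter fun p : {x // x ∈ J} => P (p : Fin n)).card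
      = (J.filter P).card := by
  classical
  refine Finset.card_bij (fun p _ => (p : Fin n)) ?_ ?_ ?_
  · intro a ha
    rw [Finset.mem_filter] at ha ⊢
    exact ⟨a.2, ha.2⟩
  · intro a _ b _ hab
    exact Subtype.ext hab
  · intro b hb
    rw [Finset.mem_filter] at hb
    exact ⟨⟨b, hb.1⟩, by simpa using hb.2, rfl⟩

lemma card_filter_perm {α : Type*} [Fintype α] [DecidableEq α] (σ : Equiv.Perm α)
    (P : α → Prop) [DecidablePred P] :
    (Finset.univ.filter fun p => P (σ p)).card = (Finset.univ.filter P).card := by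
  refine Finset.card_bij (fun p _ => σ p) ?_ ?_ ?_
  · intro a ha
    rw [Finset.mem_filter] at ha ⊢
    exact ⟨Finset.mem_univ _, ha.2⟩
  · intro a _ b _ hab
    exact σ.injective hab
  · intro b hb
    rw [Finset.mem_filter] at hb
    exact ⟨σ.symm b, by simp [hb.2], by simp⟩

lemma nondown_ge {n s : ℕ} (blk : Fin n → Fin s) (J : Finset (Fin n))
    (σ : Equiv.Perm {x // x ∈ J}) (k : Fin s) :
    (J.filter fun x => blk x = k).card ≤
      (Finset.univ.filter fun p : {x // x ∈ J} =>
        blk (p : Fin n) ≤ blk (σ p : Fin n)).card := by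
  classical
  set b : {x // x ∈ J} → Fin s := fun p => blk (p : Fin n) with hb
  set A := Finset.univ.filter fun p : {x // x ∈ J} => b p = k ∧ k ≤ b (σ p) with hA
  set B := Finset.univ.filter fun p : {x // x ∈ J} => b p < k ∧ k ≤ b (σ p) with hB
  set C := Finset.univ.filter fun p : {x // x ∈ J} => b p = k ∧ b (σ p) < k with hC
  set Out := Finset.univ.filter fun p : {x // x ∈ J} => k ≤ b p ∧ b (σ p) < k with hOut
  have hsplit : (J.filter fun x => blk x = k).card = A.card + C.card := by
    rw [← card_filter_subtype J (fun x => blk x = k)]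
    have := Finset.card_filter_add_card_filter_not
      (s := Finset.univ.filter fun p : {x // x ∈ J} => b p = k) (p := fun p => k ≤ b (σ p))
    rw [Finset.filter_filter, Finset.filter_filter] at this
    rw [← this, hA, hC]
    congr 2
    ext p
    simp [not_le]
  have hOB : Out.card = B.card := by
    have e1 : (Finset.univ.filter fun p : {x // x ∈ J} => k ≤ b (σ p)).card
        = (Finset.univ.filter fun p : {x // x ∈ J} => k ≤ b p).card :=
      card_filter_perm σ (fun p => k ≤ b p)
    have e2 := Finset.card_filter_add_card_filter_not
      (s := Finset.univ.filter fun p : {x // x ∈ J} => k ≤ b (σ p)) (p := fun p => k ≤ b p)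
    have e3 := Finset.card_filter_add_card_filter_not
      (s := Finset.univ.filter fun p : {x // x ∈ J} => k ≤ b p) (p := fun p => k ≤ b (σ p))
    rw [Finset.filter_filter, Finset.filter_filter] at e2 e3
    have hX : (Finset.univ.filter fun p : {x // x ∈ J} => k ≤ b (σ p) ∧ k ≤ b p)
        = Finset.univ.filter fun p : {x // x ∈ J} => k ≤ b p ∧ k ≤ b (σ p) := by
      ext p; simp [and_comm]
    rw [hX] at e2
    have hBeq : B = Finset.univ.filter fun p : {x // x ∈ J} => k ≤ b (σ p) ∧ ¬ k ≤ b p := by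
      ext p; simp [hB, not_le, and_comm]
    have hOeq : Out = Finset.univ.filter fun p : {x // x ∈ J} => k ≤ b p ∧ ¬ k ≤ b (σ p) := by
      ext p; simp [hOut, not_le]
    rw [hBeq, hOeq]
    omega
  have hCO : C.card ≤ Out.card := by
    refine Finset.card_le_card fun p hp => ?_
    rw [hC, Finset.mem_filter] at hp
    rw [hOut, Finset.mem_filter]
    exact ⟨hp.1, le_of_eq hp.2.1.symm, hp.2.2⟩
  have hABdisj : Disjoint A B := by
    rw [Finset.disjoint_left]
    intro p hpA hpB
    rw [hA, Finset.mem_filter] at hpA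
    rw [hB, Finset.mem_filter] at hpB
    exact absurd hpA.2.1 (ne_of_lt hpB.2.1)
  have hABsub : A ∪ B ⊆ Finset.univ.filter fun p : {x // x ∈ J} => b p ≤ b (σ p) := by
    intro p hp
    rw [Finset.mem_union] at hp
    rw [Finset.mem_filter]
    refine ⟨Finset.mem_univ _, ?_⟩
    rcases hp with hp | hp
    · rw [hA, Finset.mem_filter] at hp
      exact hp.2.1 ▸ hp.2.2
    · rw [hB, Finset.mem_filter] at hp
      exact le_of_lt (lt_of_lt_of_le hp.2.1 hp.2.2)
  calc (J.filter fun x => blk x = k).card = A.card + C.card := hsplit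
    _ ≤ A.card + B.card := by omega
    _ = (A ∪ B).card := (Finset.card_union_of_disjoint hABdisj).symm
    _ ≤ _ := Finset.card_le_card hABsub

lemma dcount_add {n s : ℕ} (blk : Fin n → Fin s) (J : Finset (Fin n))
    (σ : Equiv.Perm {x // x ∈ J}) :
    dcount blk J σ + (Finset.univ.filter fun p : {x // x ∈ J} =>
        blk (p : Fin n) ≤ blk (σ p : Fin n)).card = J.card := by
  classical
  have := Finset.card_filter_add_card_filter_not
    (s := (Finset.univ : Finset {x // x ∈ J}))
    (p := fun p => blk (σ p : Fin n) < blk (p : Fin n))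
  rw [Finset.card_univ, Fintype.card_coe] at this
  rw [dcount]
  have heq : (Finset.univ.filter fun p : {x // x ∈ J} =>
      ¬ blk (σ p : Fin n) < blk (p : Fin n))
      = Finset.univ.filter fun p : {x // x ∈ J} =>
        blk (p : Fin n) ≤ blk (σ p : Fin n) := by
    ext p; simp [not_lt]
  rw [heq] at this
  exact this

lemma dcount_le {n s : ℕ} (blk : Fin n → Fin s) (J : Finset (Fin n))
    (σ : Equiv.Perm {x // x ∈ J}) (i : ℕ)
    (hex : ∃ k, i ≤ (J.filter fun x => blk x = k).card) :
    dcount blk J σ ≤ J.card - i := by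
  obtain ⟨k, hk⟩ := hex
  have h1 := nondown_ge blk J σ k
  have h2 := dcount_add blk J σ
  omega

lemma exists_fiber_ge {n s : ℕ} (blk : Fin n → Fin s) (J : Finset (Fin n)) (i' : ℕ)
    (h : ∑ k : Fin s, min i' ((Finset.univ.filter fun x => blk x = k).card) < J.card) :
    ∃ k, i' + 1 ≤ (J.filter fun x => blk x = k).card := by
  classical
  by_contra hc
  push_neg at hc
  have hcard : J.card = ∑ k : Fin s, (J.filter fun x => blk x = k).card :=
    Finset.card_eq_sum_card_fiberwise fun x _ => Finset.mem_univ (blk x)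
  have hle : ∀ k : Fin s, (J.filter fun x => blk x = k).card
      ≤ min i' ((Finset.univ.filter fun x => blk x = k).card) := by
    intro k
    refine le_min ?_ (Finset.card_le_card (Finset.filter_subset_filter _ (Finset.subset_univ J)))
    have := hc k
    omega
  have := Finset.sum_le_sum fun k (_ : k ∈ Finset.univ) => hle k
  omega

def rot (j i : ℕ) (hj : 0 < j) (hij : i ≤ j) : Equiv.Perm (Fin j) where
  toFun t := ⟨(t.val + (j - i)) % j, Nat.mod_lt _ hj⟩
  invFun t := ⟨(t.val + i) % j, Nat.mod_lt _ hj⟩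
  left_inv t := by
    ext
    simp only [Nat.mod_add_mod]
    have h1 : t.val + (j - i) + i = t.val + j := by omega
    rw [h1, Nat.add_mod_right, Nat.mod_eq_of_lt t.isLt]
  right_inv t := by
    ext
    simp only [Nat.mod_add_mod]
    have h1 : t.val + i + (j - i) = t.val + j := by omega
    rw [h1, Nat.add_mod_right, Nat.mod_eq_of_lt t.isLt]

lemma rot_val (j i : ℕ) (hj : 0 < j) (hij : i ≤ j) (t : Fin j) (ht : i ≤ t.val) :
    (rot j i hj hij t).val = t.val - i := by
  show (t.val + (j - i)) % j = t.val - i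
  have h1 : t.val + (j - i) = (t.val - i) + j := by omega
  rw [h1, Nat.add_mod_right, Nat.mod_eq_of_lt (by omega)]

lemma exists_good {n s : ℕ} (blk : Fin n → Fin s) (hmono : Monotone blk) (i j : ℕ)
    (hi : 0 < i) (hij : i ≤ j)
    (hsum : j ≤ ∑ k : Fin s, min i ((Finset.univ.filter fun x => blk x = k).card)) :
    ∃ (J : Finset (Fin n)) (σ : Equiv.Perm {x // x ∈ J}),
      J.card = j ∧ j - i ≤ dcount blk J σ := by
  classical
  choose S hS1 hS2 using fun k : Fin s =>
    Finset.exists_subset_card_eq (s := Finset.univ.filter fun x => blk x = k)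
      (n := min i ((Finset.univ.filter fun x => blk x = k).card)) (min_le_right _ _)
  have hdisj : ∀ k k' : Fin s, k ≠ k' → Disjoint (S k) (S k') := by
    intro k k' hkk'
    rw [Finset.disjoint_left]
    intro x hx hx'
    have h1 := Finset.mem_filter.mp (hS1 k hx)
    have h2 := Finset.mem_filter.mp (hS1 k' hx')
    exact hkk' (h1.2 ▸ h2.2 ▸ rfl)
  have hcardS : (Finset.univ.biUnion S).card
      = ∑ k : Fin s, min i ((Finset.univ.filter fun x => blk x = k).card) := by
    rw [Finset.card_biUnion (fun k _ k' _ h => hdisj k k' h)]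
    exact Finset.sum_congr rfl fun k _ => hS2 k
  obtain ⟨J, hJsub, hJcard⟩ :=
    Finset.exists_subset_card_eq (s := Finset.univ.biUnion S) (n := j) (by omega)
  have hJk : ∀ k : Fin s, (J.filter fun x => blk x = k).card ≤ i := by
    intro k
    have hsub : (J.filter fun x => blk x = k) ⊆ S k := by
      intro x hx
      obtain ⟨hxJ, hxk⟩ := Finset.mem_filter.mp hx
      obtain ⟨k', -, hk'⟩ := Finset.mem_biUnion.mp (hJsub hxJ)
      have := (Finset.mem_filter.mp (hS1 k' hk')).2
      rwa [show k' = k from this ▸ hxk ▸ rfl] at hk'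
    calc (J.filter fun x => blk x = k).card ≤ (S k).card := Finset.card_le_card hsub
      _ ≤ i := by rw [hS2]; exact min_le_left _ _
  have hj0 : 0 < j := lt_of_lt_of_le hi hij
  set e := J.orderIsoOfFin hJcard with he
  set σ : Equiv.Perm {x // x ∈ J} := e.toEquiv.permCongr (rot j i hj0 hij) with hσ
  have hdown : ∀ t : Fin j, i ≤ t.val →
      blk ((σ (e t) : Fin n)) < blk ((e t : Fin n)) := by
    intro t ht
    have hre : σ (e t) = e (rot j i hj0 hij t) := by
      simp [hσ]
    set rt := rot j i hj0 hij t with hrt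
    have hrtval : rt.val = t.val - i := rot_val j i hj0 hij t ht
    have hlt : rt < t := by
      rw [Fin.lt_def, hrtval]; omega
    have hlt2 : ((e rt : {x // x ∈ J}) : Fin n) < ((e t : {x // x ∈ J}) : Fin n) :=
      Subtype.coe_lt_coe.mpr (e.strictMono hlt)
    have hle : blk ((e rt : {x // x ∈ J}) : Fin n) ≤ blk ((e t : {x // x ∈ J}) : Fin n) :=
      hmono (le_of_lt hlt2)
    rw [hre]
    rcases lt_or_eq_of_le hle with h | h
    · exact h
    · exfalso
      set k := blk ((e t : {x // x ∈ J}) : Fin n) with hk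
      have hcard2 : (Finset.Icc rt t).card ≤ (J.filter fun x => blk x = k).card := by
        refine Finset.card_le_card_of_injOn (fun u => ((e u : {x // x ∈ J}) : Fin n)) ?_ ?_
        · intro u hu
          obtain ⟨h1, h2⟩ := Finset.mem_Icc.mp hu
          refine Finset.mem_filter.mpr ⟨(e u).2, ?_⟩
          have hu1 : blk ((e rt : {x // x ∈ J}) : Fin n) ≤ blk ((e u : {x // x ∈ J}) : Fin n) :=
            hmono (Subtype.coe_le_coe.mpr (e.monotone h1))
          have hu2 : blk ((e u : {x // x ∈ J}) : Fin n) ≤ blk ((e t : {x // x ∈ J}) : Fin n) :=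
            hmono (Subtype.coe_le_coe.mpr (e.monotone h2))
          exact le_antisymm hu2 (h ▸ hu1)
        · intro a _ b _ hab
          exact e.injective (Subtype.ext hab)
      rw [Fin.card_Icc, hrtval] at hcard2
      have := hJk k
      omega
  refine ⟨J, σ, hJcard, ?_⟩
  have hTcard : ((Finset.univ : Finset (Fin j)).filter fun t => i ≤ t.val).card = j - i := by
    rw [← Nat.card_Ico i j]
    refine Finset.card_bij (fun t _ => t.val) ?_ ?_ ?_
    · intro t ht
      exact Finset.mem_Ico.mpr ⟨(Finset.mem_filter.mp ht).2, t.isLt⟩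
    · intro a _ b _ hab
      exact Fin.ext hab
    · intro m hm
      obtain ⟨h1, h2⟩ := Finset.mem_Ico.mp hm
      exact ⟨⟨m, h2⟩, Finset.mem_filter.mpr ⟨Finset.mem_univ _, h1⟩, rfl⟩
  have hsub2 : (((Finset.univ : Finset (Fin j)).filter fun t => i ≤ t.val).image
      fun t => (e t : {x // x ∈ J}))
      ⊆ Finset.univ.filter fun p : {x // x ∈ J} => blk (σ p : Fin n) < blk (p : Fin n) := by
    intro p hp
    obtain ⟨t, ht, rfl⟩ := Finset.mem_image.mp hp
    exact Finset.mem_filter.mpr ⟨Finset.mem_univ _,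
      hdown t (Finset.mem_filter.mp ht).2⟩
  have hinj : Function.Injective fun t : Fin j => (e t : {x // x ∈ J}) := e.injective
  calc j - i = _ := hTcard.symm
    _ = (((Finset.univ : Finset (Fin j)).filter fun t => i ≤ t.val).image
        fun t => (e t : {x // x ∈ J})).card := (Finset.card_image_of_injective _ hinj).symm
    _ ≤ _ := Finset.card_le_card hsub2

theorem sub_degNilradical_sumMinors
    {K : Type*} [Field K] {n s : ℕ}
    (blk : Fin n → Fin s) (hmono : Monotone blk) (hsurj : Function.Surjective blk)
    (m : ℕ → ℕ)
    (hm : ∀ i, m i = ∑ k : Fin s, min i ((Finset.univ.filter fun x => blk x = k).card))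
    (imax : ℕ)
    (himax : imax = Finset.univ.sup fun k : Fin s =>
      (Finset.univ.filter fun x => blk x = k).card)
    (j : ℕ) (hj1 : 1 ≤ j) (hj2 : j ≤ n) :
    (∃! i : ℕ, 1 ≤ i ∧ i ≤ imax ∧ m (i - 1) < j ∧ j ≤ m i) ∧
    1 ≤ j - degNilradical blk (sumMinors K n j) ∧
    j - degNilradical blk (sumMinors K n j) ≤ imax ∧
    m (j - degNilradical blk (sumMinors K n j) - 1) < j ∧
    j ≤ m (j - degNilradical blk (sumMinors K n j)) := by
  classical
  set c : Fin s → ℕ := fun k => (Finset.univ.filter fun x => blk x = k).card with hc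
  -- basic facts about m
  have hm0 : m 0 = 0 := by simp [hm]
  have hmmono : Monotone m := by
    intro a b hab
    rw [hm, hm]
    exact Finset.sum_le_sum fun k _ => min_le_min hab le_rfl
  have hsum_c : ∑ k : Fin s, c k = n := by
    have := Finset.card_eq_sum_card_fiberwise
      (f := blk) (s := (Finset.univ : Finset (Fin n))) (t := Finset.univ)
      (fun x _ => Finset.mem_univ (blk x))
    rw [Finset.card_univ, Fintype.card_fin] at this
    exact this.symm
  have hck_le : ∀ k, c k ≤ imax := fun k => himax ▸ Finset.le_sup (Finset.mem_univ k)
  have hmimax : m imax = n := by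
    rw [hm]
    exact (Finset.sum_congr rfl fun k _ => min_eq_right (hck_le k)).trans hsum_c
  have hex : ∃ i, j ≤ m i := ⟨imax, by rw [hmimax]; exact hj2⟩
  set i := Nat.find hex with hidef
  have hi_le : j ≤ m i := Nat.find_spec hex
  have hi1 : 1 ≤ i := by
    rcases Nat.eq_zero_or_pos i with h | h
    · rw [h, hm0] at hi_le; omega
    · exact h
  have hi_imax : i ≤ imax := Nat.find_min' hex (by rw [hmimax]; exact hj2)
  have hmi1 : m (i - 1) < j := by
    have := Nat.find_min hex (m := i - 1) (by omega)
    omega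
  -- there is a block of size imax
  have hn1 : 0 < n := by omega
  obtain ⟨k₀, -, hk₀⟩ := Finset.exists_mem_eq_sup (Finset.univ : Finset (Fin s))
    ⟨blk ⟨0, hn1⟩, Finset.mem_univ _⟩ fun k => (Finset.univ.filter fun x => blk x = k).card
  have hck₀ : c k₀ = imax := by rw [hc]; exact (himax.trans hk₀).symm
  have hij : i ≤ j := by
    have h1 : min (i - 1) (c k₀) ≤ m (i - 1) := by
      rw [hm]
      exact Finset.single_le_sum (f := fun k => min (i - 1) (c k))
        (fun k _ => Nat.zero_le _) (Finset.mem_univ k₀)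
    rw [hck₀] at h1
    have : min (i - 1) imax = i - 1 := min_eq_left (by omega)
    omega
  -- the degree computation
  have hdeg : degNilradical blk (sumMinors K n j) = j - i := by
    refine le_antisymm ?_ ?_
    · refine Finset.sup_le fun μ hμ => ?_
      obtain ⟨J, σ, hcard, rfl⟩ := mem_support_sumMinors hμ
      rw [inner_expOf]
      have hfib : ∃ k, i ≤ (J.filter fun x => blk x = k).card := by
        obtain ⟨k, hk⟩ := exists_fiber_ge blk J (i - 1) (by rw [hm] at hmi1; omega)
        exact ⟨k, by omega⟩
      have := dcount_le blk J σ i hfib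
      omega
    · obtain ⟨J₀, σ₀, hcard₀, hd₀⟩ := exists_good blk hmono i j hi1 hij (by rw [← hm]; exact hi_le)
      have hmem : expOf J₀ σ₀ ∈ (sumMinors K n j).support :=
        MvPolynomial.mem_support_iff.mpr (coeff_expOf_ne_zero J₀ hcard₀ σ₀)
      calc j - i ≤ dcount blk J₀ σ₀ := hd₀
        _ = _ := (inner_expOf blk J₀ σ₀).symm
        _ ≤ _ := Finset.le_sup
          (f := fun μ : (Fin n × Fin n) →₀ ℕ =>
            ∑ pq ∈ μ.support, if blk pq.2 < blk pq.1 then μ pq else 0) hmem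
  have hfinal : j - degNilradical blk (sumMinors K n j) = i := by
    rw [hdeg]; omega
  rw [hfinal]
  refine ⟨⟨i, ⟨hi1, hi_imax, hmi1, hi_le⟩, ?_⟩, hi1, hi_imax, hmi1, hi_le⟩
  rintro i' ⟨h1, h2, h3, h4⟩
  refine le_antisymm ?_ (Nat.find_min' hex h4)
  by_contra hcon
  push_neg at hcon
  have : m i ≤ m (i' - 1) := hmmono (by omega)
  omega
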